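/- arXiv:2211.15125 — 2 statements merged into one kernel-verified Lean document; each statement's English description precedes it below -/
import Mathlib

section
/- If the pointwise normalized process Y*(t) has the same distribution F_S for all t ∈ T, and D is affine invariant, then the depth cdfs coincide: Ψ_X(r) = Ψ_{X*}(r) for all r ∈ [0,1], where Ψ_X(r) = ∫_T 1{D(X(t); F_{Y(t)}) ≤ r} dt and Ψ_{X*}(r) = ∫_T 1{D(X*(t); F_S) ≤ r} dt. Consequently, the global multivariate functional extremal depth equals the local multivariate functional extremal depth. -/
open MeasureTheory Matrix

/-- The depth cdf `Ψ_X(r) = ∫_T 1{d(t) ≤ r} dt` of a pointwise-depth function `d` on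
the time domain `T`. -/
noncomputable def depthCDF (T : Set ℝ) (d : ℝ → ℝ) (r : ℝ) : ℝ :=
  (volume {t | t ∈ T ∧ d t ≤ r}).toReal

/-- `X ≺ Y` ("X is more extreme than Y") in terms of depth cdfs: there is `r ∈ (0,1)`
with `Ψ_X = Ψ_Y` on `[0, r)` and `Ψ_X(r) > Ψ_Y(r)`. -/
def precCDF (Ψ Φ : ℝ → ℝ) : Prop :=
  ∃ r ∈ Set.Ioo (0:ℝ) 1, (∀ u, 0 ≤ u → u < r → Ψ u = Φ u) ∧ Φ r < Ψ r

/-- If the pointwise normalized process `Y*(t)` has the same distribution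
`F_S` for all `t ∈ T`, and `D` is affine invariant, then the depth cdfs coincide:
`Ψ_X(r) = Ψ_{X*}(r)` for all `r ∈ [0,1]`. Consequently, the global multivariate
functional extremal depth (defined from the normalized pointwise depths) equals the local
multivariate functional extremal depth (defined from the original pointwise depths):
the probability that `X` is not more extreme than a random curve `Y` is the same in
both versions. -/
theorem stmt3 {p : ℕ} (T : Set ℝ)
    (D : (Fin p → ℝ) → Measure (Fin p → ℝ) → ℝ)
    (haff : ∀ (A : Matrix (Fin p) (Fin p) ℝ) (b : Fin p → ℝ)
      (μ : Measure (Fin p → ℝ)), IsUnit A.det →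
      ∀ x : Fin p → ℝ,
        D (A.mulVec x + b) (Measure.map (fun y => A.mulVec y + b) μ) = D x μ)
    (F : ℝ → Measure (Fin p → ℝ)) (μv : ℝ → Fin p → ℝ)
    (R : ℝ → Matrix (Fin p) (Fin p) ℝ) (hR : ∀ t, IsUnit (R t).det)
    (FS : Measure (Fin p → ℝ))
    (hFS : ∀ t ∈ T, Measure.map (fun y => (R t).mulVec (y - μv t)) (F t) = FS)
    (X : ℝ → Fin p → ℝ) :
    (∀ r ∈ Set.Icc (0:ℝ) 1,
        depthCDF T (fun t => D (X t) (F t)) r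
          = depthCDF T (fun t => D ((R t).mulVec (X t - μv t)) FS) r)
    ∧ ∀ P : Measure (ℝ → Fin p → ℝ),
        P {Y | ¬ precCDF (depthCDF T (fun t => D (X t) (F t)))
                         (depthCDF T (fun t => D (Y t) (F t)))}
        = P {Y | ¬ precCDF (depthCDF T (fun t => D ((R t).mulVec (X t - μv t)) FS))
                           (depthCDF T (fun t => D ((R t).mulVec (Y t - μv t)) FS))} := by
  have key : ∀ (Z : ℝ → Fin p → ℝ) (t : ℝ), t ∈ T →
      D ((R t).mulVec (Z t - μv t)) FS = D (Z t) (F t) := by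
    intro Z t ht
    have h := haff (R t) (-(R t).mulVec (μv t)) (F t) (hR t) (Z t)
    have hfun : (fun y => (R t).mulVec y + -(R t).mulVec (μv t))
        = fun y => (R t).mulVec (y - μv t) := by
      funext y
      simp [sub_eq_add_neg, Matrix.mulVec_add, Matrix.mulVec_neg]
    rw [hfun, hFS t ht] at h
    rw [← h]
    congr 1
    simp [sub_eq_add_neg, Matrix.mulVec_add, Matrix.mulVec_neg]
  have hcdf : ∀ (Z : ℝ → Fin p → ℝ),
      depthCDF T (fun t => D (Z t) (F t))
        = depthCDF T (fun t => D ((R t).mulVec (Z t - μv t)) FS) := by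
    intro Z
    funext r
    unfold depthCDF
    have : {t | t ∈ T ∧ D (Z t) (F t) ≤ r}
        = {t | t ∈ T ∧ D ((R t).mulVec (Z t - μv t)) FS ≤ r} := by
      ext t
      exact and_congr_right fun ht => by rw [key Z t ht]
    rw [this]
  refine ⟨fun r _ => by rw [hcdf X], fun P => ?_⟩
  refine congrArg P (Set.ext fun Y => ?_)
  simp only [Set.mem_setOf_eq]
  rw [hcdf X, hcdf Y]
end

section
/- If D is monotone relative to the deepest point (i.e., D(θ + a(x − θ); F) ≥ D(x; F) for a ∈ [0,1] where θ is the deepest point of F), then GMFID is monotone relative to the deepest curve: GMFID(Θ + a(X − Θ); F_Y, β) ≥ GMFID(X; F_Y, β) for all a ∈ [0,1], where Θ(t) is the pointwise deepest point. -/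
open MeasureTheory Matrix

/-- If `D` is monotone relative to the deepest point (i.e.
`D(θ + a(x − θ); F) ≥ D(x; F)` for `a ∈ [0,1]`, `θ` the deepest point of `F`), then
GMFID is monotone relative to the deepest curve:
`GMFID(Θ + a(X − Θ); F_Y, β) ≥ GMFID(X; F_Y, β)` for all `a ∈ [0,1]`, where `Θ(t)` is the
pointwise deepest point.

Here `GMFID(X) = ∫_T D(X*(t); F_S) w_β(t) dt` with `X*(t) = R t (X(t) − μ(t))` linear in
`X(t)`, and `Θ*(t) = R t (Θ(t) − μ(t))` is the deepest point of `F_S` for each `t`. -/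
theorem stmt6 {p : ℕ} (T : Set ℝ)
    (D : (Fin p → ℝ) → Measure (Fin p → ℝ) → ℝ)
    (FS : Measure (Fin p → ℝ))
    (μv : ℝ → Fin p → ℝ) (R : ℝ → Matrix (Fin p) (Fin p) ℝ)
    (Θ : ℝ → Fin p → ℝ)   -- pointwise deepest curve
    (hdeep : ∀ t ∈ T, ∀ x : Fin p → ℝ,
        D x FS ≤ D ((R t).mulVec (Θ t - μv t)) FS)
    (hmono : ∀ t ∈ T, ∀ x : Fin p → ℝ, ∀ a : ℝ, a ∈ Set.Icc (0:ℝ) 1 →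
        D x FS ≤ D ((R t).mulVec (Θ t - μv t)
                      + a • (x - (R t).mulVec (Θ t - μv t))) FS)
    (w : ℝ → ℝ) (hw : ∀ t, 0 ≤ w t)
    (X : ℝ → Fin p → ℝ) (a : ℝ) (ha : a ∈ Set.Icc (0:ℝ) 1)
    (hInt1 : IntegrableOn (fun t => D ((R t).mulVec (X t - μv t)) FS * w t) T volume)
    (hInt2 : IntegrableOn
        (fun t => D ((R t).mulVec ((Θ t + a • (X t - Θ t)) - μv t)) FS * w t) T volume) :
    (∫ t in T, D ((R t).mulVec (X t - μv t)) FS * w t)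
      ≤ ∫ t in T, D ((R t).mulVec ((Θ t + a • (X t - Θ t)) - μv t)) FS * w t := by
  set f : ℝ → ℝ := fun t => D ((R t).mulVec (X t - μv t)) FS * w t with hf
  set g : ℝ → ℝ := fun t => D ((R t).mulVec ((Θ t + a • (X t - Θ t)) - μv t)) FS * w t with hg
  -- pointwise inequality on T
  have hpt : ∀ t ∈ T, f t ≤ g t := by
    intro t ht
    have key := hmono t ht ((R t).mulVec (X t - μv t)) a ha
    have harg : (R t).mulVec (Θ t - μv t)
        + a • ((R t).mulVec (X t - μv t) - (R t).mulVec (Θ t - μv t))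
        = (R t).mulVec ((Θ t + a • (X t - Θ t)) - μv t) := by
      rw [← Matrix.mulVec_sub, ← Matrix.mulVec_smul, ← Matrix.mulVec_add]
      congr 1
      have : X t - μv t - (Θ t - μv t) = X t - Θ t := by abel
      rw [this]
      abel
    rw [harg] at key
    exact mul_le_mul_of_nonneg_right key (hw t)
  -- move to a.e. measurable representatives
  set ν : Measure ℝ := volume.restrict T with hν
  have hfmeas := hInt1.1
  have hgmeas := hInt2.1
  set f₀ := hfmeas.mk f with hf₀
  set g₀ := hgmeas.mk g with hg₀
  have hff₀ : f =ᵐ[ν] f₀ := hfmeas.ae_eq_mk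
  have hgg₀ : g =ᵐ[ν] g₀ := hgmeas.ae_eq_mk
  -- the bad set N where representatives disagree
  set N : Set ℝ := {t | f t ≠ f₀ t} ∪ {t | g t ≠ g₀ t} with hN
  have hNnull : ν N = 0 := by
    apply measure_union_null
    · exact hff₀
    · exact hgg₀
  set N' : Set ℝ := toMeasurable ν N with hN'
  have hN'meas : MeasurableSet N' := measurableSet_toMeasurable ν N
  have hN'null : ν N' = 0 := by rw [hN', measure_toMeasurable]; exact hNnull
  -- the measurable set where the inequality fails
  set S : Set ℝ := {t | g₀ t < f₀ t} with hS
  have hSmeas : MeasurableSet S :=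
    measurableSet_lt hgmeas.stronglyMeasurable_mk.measurable
      hfmeas.stronglyMeasurable_mk.measurable
  have hST : S ∩ T ⊆ N' ∩ T := by
    rintro t ⟨htS, htT⟩
    refine ⟨subset_toMeasurable ν N ?_, htT⟩
    by_contra htN
    rw [hN, Set.mem_union] at htN
    push_neg at htN
    have h1 : f t = f₀ t := by simpa using htN.1
    have h2 : g t = g₀ t := by simpa using htN.2
    have := hpt t htT
    rw [h1, h2] at this
    exact absurd htS (not_lt.mpr this)
  have hSnull : ν S = 0 := by
    rw [hν, Measure.restrict_apply hSmeas]
    have : volume (S ∩ T) ≤ volume (N' ∩ T) := measure_mono hST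
    have h2 : volume (N' ∩ T) = 0 := by
      rw [← Measure.restrict_apply hN'meas]
      exact hN'null
    exact le_antisymm (h2 ▸ this) zero_le
  -- a.e. inequality
  have hae : f ≤ᵐ[ν] g := by
    have h1 : ∀ᵐ t ∂ν, f₀ t ≤ g₀ t := by
      rw [ae_iff]
      have he : {t | ¬ f₀ t ≤ g₀ t} = S := by ext t; simp [hS, not_le]
      rw [he]; exact hSnull
    filter_upwards [h1, hff₀, hgg₀] with t h1t h2t h3t
    rw [h2t, h3t]
    exact h1t
  exact integral_mono_ae hInt1 hInt2 hae
end
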